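/- Let α ∈ 𝕋^d be rationally independent, F(θ,z) = (θ+α, f_θ(z)) a fibered holomorphic dynamics with the zero section as invariant curve (f_θ(0) = 0 for all θ), and suppose 𝒰 ⊂ 𝕋^d × ℂ is a bounded open invariant tube containing the zero section with F(𝒰) ⊂ 𝒰 and each fiber 𝒰_θ a simply connected domain containing 0. Set ρ₁(θ) = ∂_z f_θ(0) and S_u^n(θ) = Σ_{i=0}^{n-1} log|ρ₁(θ+iα)|. Then there exist constants B₊ > 0, B₋ < 0 and a point θ̃ ∈ 𝕋^d such that B₋ < S_u^n(θ̃) < B₊ for all n ≥ 0. -/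

import Mathlib

open Metric Set MeasureTheory

instance : Fact ((0:ℝ) < 1) := ⟨one_pos⟩

/-- The `d`-dimensional torus `𝕋^d = ℝ^d/ℤ^d`. -/
abbrev Torus (d : ℕ) := Fin d → AddCircle (1:ℝ)

/-- `α` is rationally independent iff the rotation `θ ↦ θ + α` is minimal. -/
def RatIndep {d : ℕ} (α : Torus d) : Prop :=
  ∀ θ : Torus d, Dense (Set.range fun n : ℕ => θ + n • α)

instance : IsProbabilityMeasure (volume : Measure (AddCircle (1:ℝ))) :=
  ⟨by rw [AddCircle.measure_univ]; norm_num⟩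

namespace BirkhoffAux

variable {d : ℕ} (α : Torus d) (f : Torus d → ℂ → ℂ)

/-- The fiberwise iterate `f_{θ+(n-1)α} ∘ ⋯ ∘ f_θ`. -/
noncomputable def iter : ℕ → Torus d → ℂ → ℂ
  | 0, _, z => z
  | (n+1), θ, z => f (θ + n • α) (iter n θ z)

/-- The cocycle function `g(θ) = log |ρ₁(θ)|`. -/
noncomputable def birkG : Torus d → ℝ := fun θ => Real.log ‖deriv (f θ) 0‖

/-- The Birkhoff sums `S_u^n(θ)`. -/
noncomputable def birkS : ℕ → Torus d → ℝ :=
  fun n θ => ∑ i ∈ Finset.range n, birkG f (θ + i • α)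

theorem birkS_add (m n : ℕ) (θ : Torus d) :
    birkS α f (m + n) θ = birkS α f m θ + birkS α f n (θ + m • α) := by
  unfold birkS
  rw [Finset.sum_range_add]
  congr 1
  apply Finset.sum_congr rfl
  intro i _
  congr 1
  rw [add_nsmul, ← add_assoc]

variable {𝒰 : Set (Torus d × ℂ)}

theorem iter_mem (hinv : ∀ p ∈ 𝒰, (p.1 + α, f p.1 p.2) ∈ 𝒰) :
    ∀ (n : ℕ) (θ : Torus d) (z : ℂ), (θ, z) ∈ 𝒰 → (θ + n • α, iter α f n θ z) ∈ 𝒰 := by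
  intro n
  induction n with
  | zero => intro θ z hz; simpa [iter] using hz
  | succ n ih =>
    intro θ z hz
    have h := hinv (θ + n • α, iter α f n θ z) (ih θ z hz)
    have hrw : θ + n • α + α = θ + (n + 1) • α := by
      rw [succ_nsmul, add_assoc]
    simpa [iter, hrw] using h

theorem iter_zero (hfix : ∀ θ : Torus d, f θ 0 = 0) :
    ∀ (n : ℕ) (θ : Torus d), iter α f n θ 0 = 0 := by
  intro n
  induction n with
  | zero => intro θ; rfl
  | succ n ih => intro θ; simp [iter, ih, hfix]

theorem iter_diffOn (hhol : ∀ θ : Torus d, DifferentiableOn ℂ (f θ) {z : ℂ | (θ, z) ∈ 𝒰})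
    (hinv : ∀ p ∈ 𝒰, (p.1 + α, f p.1 p.2) ∈ 𝒰) (n : ℕ) (θ : Torus d) :
    DifferentiableOn ℂ (iter α f n θ) {z : ℂ | (θ, z) ∈ 𝒰} := by
  induction n with
  | zero => exact differentiableOn_id
  | succ n ih =>
    exact (hhol (θ + n • α)).comp ih (fun z hz => iter_mem α f hinv n θ z hz)

theorem iter_hasDerivAt (hopen : IsOpen 𝒰)
    (hzero : ∀ θ : Torus d, (θ, (0:ℂ)) ∈ 𝒰)
    (hhol : ∀ θ : Torus d, DifferentiableOn ℂ (f θ) {z : ℂ | (θ, z) ∈ 𝒰})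
    (hfix : ∀ θ : Torus d, f θ 0 = 0) (n : ℕ) (θ : Torus d) :
    HasDerivAt (iter α f n θ) (∏ i ∈ Finset.range n, deriv (f (θ + i • α)) 0) 0 := by
  induction n with
  | zero => simp only [Finset.range_zero, Finset.prod_empty]; exact hasDerivAt_id (0:ℂ)
  | succ n ih =>
    have hUopen : IsOpen {z : ℂ | (θ + n • α, z) ∈ 𝒰} :=
      hopen.preimage (Continuous.prodMk_right (θ + n • α))
    have hda : DifferentiableAt ℂ (f (θ + n • α)) 0 :=
      (hhol (θ + n • α)).differentiableAt (hUopen.mem_nhds (hzero (θ + n • α)))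
    have hd' : HasDerivAt (f (θ + n • α)) (deriv (f (θ + n • α)) 0) (iter α f n θ 0) := by
      rw [iter_zero α f hfix]; exact hda.hasDerivAt
    have hcomp := hd'.comp 0 ih
    have h2 : HasDerivAt (iter α f (n+1) θ)
        (deriv (f (θ + n • α)) 0 * ∏ i ∈ Finset.range n, deriv (f (θ + i • α)) 0) 0 := hcomp
    rw [Finset.prod_range_succ]
    rw [mul_comm] at h2
    exact h2

end BirkhoffAux

open BirkhoffAux

set_option maxHeartbeats 2000000 in
theorem birkhoff_sums_bounded_at_a_point {d : ℕ} (α : Torus d) (hα : RatIndep α)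
    (f : Torus d → ℂ → ℂ) (𝒰 : Set (Torus d × ℂ))
    (hopen : IsOpen 𝒰)
    (hbdd : Bornology.IsBounded (Prod.snd '' 𝒰))
    (hzero : ∀ θ : Torus d, (θ, (0:ℂ)) ∈ 𝒰)
    (hsc : ∀ θ : Torus d, SimplyConnectedSpace {z : ℂ // (θ, z) ∈ 𝒰})
    (hcont : ContinuousOn (fun p : Torus d × ℂ => f p.1 p.2) 𝒰)
    (hhol : ∀ θ : Torus d, DifferentiableOn ℂ (f θ) {z : ℂ | (θ, z) ∈ 𝒰})
    (hinj : Set.InjOn (fun p : Torus d × ℂ => (p.1 + α, f p.1 p.2)) 𝒰)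
    (hfix : ∀ θ : Torus d, f θ 0 = 0)
    (hinv : ∀ p ∈ 𝒰, (p.1 + α, f p.1 p.2) ∈ 𝒰)
    (hderiv : ∀ θ : Torus d, deriv (f θ) 0 ≠ 0)
    (hindiff : (∫ θ : Torus d, Real.log ‖deriv (f θ) 0‖) = 0) :
    ∃ Bp > (0:ℝ), ∃ Bm < (0:ℝ), ∃ θt : Torus d,
      ∀ n : ℕ, Bm < (∑ i ∈ Finset.range n, Real.log ‖deriv (f (θt + i • α)) 0‖) ∧
        (∑ i ∈ Finset.range n, Real.log ‖deriv (f (θt + i • α)) 0‖) < Bp := by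
  classical
  -- Step 1: a uniform disk `closedBall 0 r` inside every fiber of `𝒰`.
  obtain ⟨u, v, hu, hv, huu, hv0, huv⟩ :=
    generalized_tube_lemma isCompact_univ
      (isCompact_singleton : IsCompact ({0} : Set ℂ)) hopen
      (by rintro ⟨θ, z⟩ ⟨-, hz⟩
          rw [mem_singleton_iff] at hz
          subst hz; exact hzero θ)
  obtain ⟨r₀, hr₀, hball⟩ := Metric.isOpen_iff.1 hv 0 (hv0 rfl)
  have hr0 : 0 < r₀ / 2 := by positivity
  set r : ℝ := r₀ / 2 with hr_def
  have hsub : ∀ (θ : Torus d) (z : ℂ), z ∈ closedBall (0:ℂ) r → (θ, z) ∈ 𝒰 := by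
    intro θ z hz
    rw [mem_closedBall] at hz
    refine huv ⟨huu (mem_univ θ), hball ?_⟩
    rw [mem_ball]
    have : r = r₀ / 2 := hr_def
    linarith
  -- Step 2: a uniform bound for the fibers.
  obtain ⟨C, hC⟩ := hbdd.subset_closedBall 0
  set R : ℝ := max C r + 1 with hR_def
  have hrR : r < R := lt_of_le_of_lt (le_max_right C r) (lt_add_one _)
  have hmemball : ∀ p ∈ 𝒰, p.2 ∈ ball (0:ℂ) R := by
    intro p hp
    have h1 : p.2 ∈ closedBall (0:ℂ) C := hC ⟨p, hp, rfl⟩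
    rw [mem_closedBall] at h1
    rw [mem_ball]
    have h2 : C ≤ max C r := le_max_left C r
    have : R = max C r + 1 := hR_def
    linarith
  -- Step 3 : continuity of `ρ = deriv (f θ) 0` via the Cauchy integral formula
  have hcontθ : ∀ θ : Torus d, ContinuousOn (f θ) (closedBall (0:ℂ) r) := by
    intro θ
    exact hcont.comp (Continuous.prodMk_right θ).continuousOn (fun z hz => hsub θ z hz)
  have hdcc : ∀ θ : Torus d, DiffContOnCl ℂ (f θ) (ball (0:ℂ) r) := by
    intro θ
    refine ⟨(hhol θ).mono (fun z hz => hsub θ z (ball_subset_closedBall hz)), ?_⟩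
    rw [closure_ball (0:ℂ) hr0.ne']
    exact hcontθ θ
  have hρcont : Continuous fun θ : Torus d => deriv (f θ) 0 := by
    have hcm : ∀ t : ℝ, circleMap 0 r t - 0 ≠ 0 := fun t => by
      rw [sub_zero]; exact circleMap_ne_center hr0.ne'
    have hFcont : Continuous (Function.uncurry fun (θ : Torus d) (t : ℝ) =>
        (circleMap 0 r t * Complex.I) •
          ((circleMap 0 r t - 0) ^ (-2 : ℤ) • f θ (circleMap 0 r t))) := by
      have hc1 : Continuous fun p : Torus d × ℝ => circleMap 0 r p.2 * Complex.I :=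
        (((continuous_circleMap 0 r).comp continuous_snd).mul continuous_const)
      have hc2 : Continuous fun p : Torus d × ℝ => (circleMap 0 r p.2 - 0) ^ (-2 : ℤ) := by
        apply Continuous.zpow₀ (((continuous_circleMap 0 r).comp continuous_snd).sub
          continuous_const)
        intro p; exact Or.inl (hcm p.2)
      have hc3 : Continuous fun p : Torus d × ℝ => f p.1 (circleMap 0 r p.2) := by
        rw [continuous_iff_continuousAt]
        intro p
        have hmem : (p.1, circleMap 0 r p.2) ∈ 𝒰 :=
          hsub p.1 _ (circleMap_mem_closedBall 0 hr0.le p.2)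
        have h4 : ContinuousAt (fun q : Torus d × ℂ => f q.1 q.2) (p.1, circleMap 0 r p.2) :=
          hcont.continuousAt (hopen.mem_nhds hmem)
        have h5 : ContinuousAt (fun q : Torus d × ℝ =>
            ((q.1, circleMap 0 r q.2) : Torus d × ℂ)) p :=
          (continuous_fst.prodMk ((continuous_circleMap 0 r).comp continuous_snd)).continuousAt
        show ContinuousAt ((fun q : Torus d × ℂ => f q.1 q.2) ∘
          (fun q : Torus d × ℝ => ((q.1, circleMap 0 r q.2) : Torus d × ℂ))) p
        exact ContinuousAt.comp h4 h5
      exact hc1.smul (hc2.smul hc3)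
    have hparam := intervalIntegral.continuous_parametric_intervalIntegral_of_continuous'
      (μ := volume) hFcont 0 (2 * Real.pi)
    have heq : (fun θ : Torus d => deriv (f θ) 0) = fun θ =>
        (2 * Real.pi * Complex.I : ℂ)⁻¹ •
          ∫ t in (0:ℝ)..(2 * Real.pi),
            (circleMap 0 r t * Complex.I) •
              ((circleMap 0 r t - 0) ^ (-2 : ℤ) • f θ (circleMap 0 r t)) := by
      funext θ
      rw [eq_inv_smul_iff₀ (by simp [Real.pi_ne_zero, Complex.I_ne_zero]),
        ← (hdcc θ).deriv_eq_smul_circleIntegral hr0]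
      rw [circleIntegral]
      apply intervalIntegral.integral_congr
      intro t _
      simp [deriv_circleMap, zpow_neg, one_div]
    rw [heq]
    exact hparam.const_smul ((2 * Real.pi * Complex.I : ℂ)⁻¹)
  have hρne : ∀ θ : Torus d, deriv (f θ) 0 ≠ 0 := hderiv
  have hgcont : Continuous (birkG f) := by
    rw [continuous_iff_continuousAt]
    intro θ
    exact (Real.continuousAt_log (by simpa using hρne θ)).comp (hρcont.norm.continuousAt)
  -- Step 4 : the uniform upper bound via the Schwarz lemma
  set B : ℝ := Real.log (R / r) with hB_def
  have hB0 : 0 < B := Real.log_pos ((one_lt_div hr0).2 hrR)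
  have hupper : ∀ (θ : Torus d) (n : ℕ), birkS α f n θ ≤ B := by
    intro θ n
    have hdOn : DifferentiableOn ℂ (iter α f n θ) (ball (0:ℂ) r) :=
      (iter_diffOn α f hhol hinv n θ).mono
        (fun z hz => hsub θ z (ball_subset_closedBall hz))
    have hmaps : MapsTo (iter α f n θ) (ball (0:ℂ) r) (ball (iter α f n θ 0) R) := by
      intro z hz
      rw [iter_zero α f hfix]
      have hz' : (θ, z) ∈ 𝒰 := hsub θ z (ball_subset_closedBall hz)
      have hm : (θ + n • α, iter α f n θ z) ∈ 𝒰 := iter_mem α f hinv n θ z hz'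
      have := hmemball (θ + n • α, iter α f n θ z) hm
      exact this
    have hSch := Complex.norm_deriv_le_div_of_mapsTo_ball hdOn (hmaps.mono_right ball_subset_closedBall) hr0
    rw [(iter_hasDerivAt α f hopen hzero hhol hfix n θ).deriv] at hSch
    have hprod : ∏ i ∈ Finset.range n, ‖deriv (f (θ + i • α)) 0‖ ≤ R / r := by
      calc ∏ i ∈ Finset.range n, ‖deriv (f (θ + i • α)) 0‖
          = ‖∏ i ∈ Finset.range n, deriv (f (θ + i • α)) 0‖ := (norm_prod _ _).symm
        _ ≤ R / r := hSch
    have hpos : 0 < ∏ i ∈ Finset.range n, ‖deriv (f (θ + i • α)) 0‖ :=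
      Finset.prod_pos fun i _ => norm_pos_iff.2 (hρne _)
    calc birkS α f n θ
        = Real.log (∏ i ∈ Finset.range n, ‖deriv (f (θ + i • α)) 0‖) :=
          (Real.log_prod fun i _ => (norm_pos_iff.2 (hρne _)).ne').symm
      _ ≤ Real.log (R / r) := Real.log_le_log hpos hprod
      _ = B := hB_def.symm
  -- Step 5 : the measure-theoretic / compactness lower bound
  have hScont : ∀ n, Continuous (birkS α f n) := by
    intro n
    exact continuous_finset_sum _ fun i _ => hgcont.comp (continuous_add_right (i • α))
  have hint : ∀ h : Torus d → ℝ, Continuous h → Integrable h := fun h hh =>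
    hh.integrable_of_hasCompactSupport (HasCompactSupport.of_compactSpace h)
  have hSint : ∀ n, (∫ θ, birkS α f n θ) = 0 := by
    intro n
    have h1 : (∫ θ, birkS α f n θ) = ∑ i ∈ Finset.range n, ∫ θ, birkG f (θ + i • α) :=
      integral_finset_sum _ fun i _ => hint _ (hgcont.comp (continuous_add_right (i • α)))
    rw [h1]
    have h2 : ∀ i : ℕ, (∫ θ : Torus d, birkG f (θ + i • α)) = 0 := fun i => by
      rw [integral_add_right_eq_self (birkG f) (i • α)]
      exact hindiff
    simp [h2]
  have hexists : ∀ N : ℕ, ∃ θ, 0 ≤ birkS α f N θ := by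
    intro N
    by_contra h
    push_neg at h
    obtain ⟨θm, -, hθm⟩ := isCompact_univ.exists_isMaxOn univ_nonempty (hScont N).continuousOn
    have hle : ∀ θ, birkS α f N θ ≤ birkS α f N θm := fun θ =>
      (isMaxOn_iff.1 hθm) θ (mem_univ θ)
    have h1 : (∫ θ, birkS α f N θ) ≤ ∫ _θ : Torus d, birkS α f N θm :=
      integral_mono (hint _ (hScont N)) (integrable_const _) hle
    rw [integral_const, probReal_univ] at h1
    simp only [ENNReal.toReal_one, one_smul] at h1
    rw [hSint N] at h1
    exact absurd (lt_of_le_of_lt h1 (h θm)) (lt_irrefl 0)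
  -- nested compact sets
  have hAclosed : ∀ N : ℕ, IsClosed (⋂ n ∈ Set.Iic N, {θ | -B ≤ birkS α f n θ}) :=
    fun N => isClosed_biInter fun n _ => isClosed_le continuous_const (hScont n)
  have hAanti : ∀ N : ℕ, (⋂ n ∈ Set.Iic (N+1), {θ | -B ≤ birkS α f n θ}) ⊆
      ⋂ n ∈ Set.Iic N, {θ | -B ≤ birkS α f n θ} := by
    intro N θ hθ
    rw [mem_iInter₂] at hθ ⊢
    exact fun n hn => hθ n (Set.mem_Iic.2 (le_trans (Set.mem_Iic.1 hn) (Nat.le_succ N)))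
  have hAne : ∀ N : ℕ, (⋂ n ∈ Set.Iic N, {θ | -B ≤ birkS α f n θ}).Nonempty := by
    intro N
    obtain ⟨θN, hθN⟩ := hexists N
    refine ⟨θN, ?_⟩
    rw [mem_iInter₂]
    intro n hn
    have hdec : birkS α f N θN = birkS α f n θN + birkS α f (N - n) (θN + n • α) := by
      conv_lhs => rw [← Nat.add_sub_cancel' hn]
      exact birkS_add α f n (N - n) θN
    have hup := hupper (θN + n • α) (N - n)
    rw [mem_setOf_eq]
    linarith
  obtain ⟨θt, hθt⟩ := IsCompact.nonempty_iInter_of_sequence_nonempty_isCompact_isClosed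
    _ hAanti hAne ((hAclosed 0).isCompact) hAclosed
  have hlow : ∀ n, -B ≤ birkS α f n θt := by
    intro n
    have h1 := mem_iInter.1 hθt n
    rw [mem_iInter₂] at h1
    exact h1 n (Set.mem_Iic.2 le_rfl)
  refine ⟨B + 1, by linarith, -(B + 1), by linarith, θt, fun n => ?_⟩
  have h1 := hlow n
  have h2 := hupper θt n
  exact ⟨by unfold birkS birkG at h1; linarith, by unfold birkS birkG at h2; linarith⟩
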